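/- For the Möbius map τ(z) = (z+a)/(1+az) with 0 < a < 1 real, and for |z| ≤ r with a ≪ 1−r, the Poincaré distance satisfies dist_P(z, τ(z)) = tanh^{−1}( |τ(z)−z| / |1 − z̄·τ(z)| ), and this quantity is bounded above by a constant times tanh^{−1}( a·|1−z²| / (1−|z|) ). -/

import Mathlib

open Set Complex

noncomputable section

/-- The inverse hyperbolic tangent `tanh⁻¹ x = ½ log((1+x)/(1-x))`. -/
def arTanh (x : ℝ) : ℝ := Real.log ((1 + x) / (1 - x)) / 2

/-- The Poincaré distance on the unit disc:
`dist_P(w₁,w₂) = tanh⁻¹ (|w₁ - w₂| / |1 - w̄₁ w₂|)`. -/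
def distP (w₁ w₂ : ℂ) : ℝ :=
  arTanh (‖w₁ - w₂‖ / ‖1 - (starRingEnd ℂ) w₁ * w₂‖)

/-- `D_R`, the disc of center `0` and of hyperbolic radius `R`, i.e. `D_R = r·D`
with `R = log((1+r)/(1-r))`, that is, `r = tanh (R/2)`. -/
def hyperDisc (R : ℝ) : Set ℂ := {z : ℂ | ‖z‖ < Real.tanh (R / 2)}

end

lemma arTanh_mono {x y : ℝ} (hx : 0 ≤ x) (hxy : x ≤ y) (hy : y < 1) :
    arTanh x ≤ arTanh y := by
  unfold arTanh
  have h1 : (1 + x) / (1 - x) ≤ (1 + y) / (1 - y) := by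
    rw [div_le_div_iff₀ (by linarith) (by linarith)]
    nlinarith
  have h2 : 0 < (1 + x) / (1 - x) := div_pos (by linarith) (by linarith)
  have := Real.log_le_log h2 h1
  linarith


/-- for the Möbius map `τ(z) = (z+a)/(1+az)` with `0 < a < 1` real
and `|z| ≤ r` with `a ≤ c₀ (1-r)` (i.e. `a ≪ 1-r`), one has
`dist_P(z,τ(z)) = tanh⁻¹(|τ(z)-z|/|1 - z̄ τ(z)|)` and this quantity is at most a
constant times `tanh⁻¹( a |1-z²| / (1-|z|) )`. -/
theorem mobius_displacement_bound : ∃ c₀ C : ℝ, 0 < c₀ ∧ 0 < C ∧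
    ∀ (a r : ℝ) (z : ℂ), 0 < a → a < 1 → 0 < r → r < 1 →
    a ≤ c₀ * (1 - r) → ‖z‖ ≤ r →
    distP z ((z + (a : ℂ)) / (1 + (a : ℂ) * z)) =
        arTanh (‖(z + (a : ℂ)) / (1 + (a : ℂ) * z) - z‖ /
          ‖1 - (starRingEnd ℂ) z * ((z + (a : ℂ)) / (1 + (a : ℂ) * z))‖) ∧
      distP z ((z + (a : ℂ)) / (1 + (a : ℂ) * z)) ≤
        C * arTanh (a * ‖1 - z ^ 2‖ / (1 - ‖z‖)) := by
  refine ⟨1/4, 1, by norm_num, by norm_num, ?_⟩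
  intro a r z ha ha1 hr hr1 har hz
  refine ⟨by unfold distP; rw [norm_sub_rev z], ?_⟩
  have hzr1 : ‖z‖ < 1 := lt_of_le_of_lt hz hr1
  have hne : (1 + (a : ℂ) * z) ≠ 0 := by
    intro h
    have : ‖(a : ℂ) * z‖ = ‖(-1 : ℂ)‖ := by
      rw [show ((a:ℂ) * z) = -1 by linear_combination h]
    simp [Complex.norm_real, abs_of_pos ha] at this
    nlinarith
  -- numerator
  have h1 : (z + (a : ℂ)) / (1 + (a : ℂ) * z) - z = (a : ℂ) * (1 - z ^ 2) / (1 + (a : ℂ) * z) := by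
    rw [eq_div_iff hne, sub_mul, div_mul_cancel₀ _ hne]
    ring
  set N : ℂ := (1 - (starRingEnd ℂ) z * z) + (a : ℂ) * (z - (starRingEnd ℂ) z) with hN
  have h2 : 1 - (starRingEnd ℂ) z * ((z + (a : ℂ)) / (1 + (a : ℂ) * z)) = N / (1 + (a : ℂ) * z) := by
    rw [hN]
    rw [eq_div_iff hne, sub_mul, mul_assoc, div_mul_cancel₀ _ hne]
    ring
  have hNre : N.re = 1 - ‖z‖ ^ 2 := by
    simp [hN, Complex.sub_re, Complex.add_re, Complex.mul_re, Complex.conj_re, Complex.conj_im,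
      Complex.ofReal_re, Complex.ofReal_im, Complex.sq_norm, Complex.normSq_apply]
  have hNabs : 1 - ‖z‖ ≤ ‖N‖ := by
    have h3 : 1 - ‖z‖ ^ 2 ≤ ‖N‖ := hNre ▸ Complex.re_le_norm N
    nlinarith [norm_nonneg z]
  have hNpos : 0 < ‖N‖ := by linarith
  -- the quantity X
  have hX : ‖(z + (a : ℂ)) / (1 + (a : ℂ) * z) - z‖ /
      ‖1 - (starRingEnd ℂ) z * ((z + (a : ℂ)) / (1 + (a : ℂ) * z))‖
      = a * ‖1 - z ^ 2‖ / ‖N‖ := by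
    have hd : ‖1 + (a : ℂ) * z‖ ≠ 0 := by
      simpa using hne
    rw [h1, h2, norm_div, norm_div, norm_mul, Complex.norm_real, Real.norm_eq_abs, abs_of_pos ha]
    rw [div_div_div_cancel_right₀ hd]
  have habs2 : ‖1 - z ^ 2‖ ≤ 2 := by
    have h := norm_add_le (1 : ℂ) (-(z ^ 2))
    rw [← sub_eq_add_neg, norm_one, norm_neg, norm_pow] at h
    nlinarith [norm_nonneg z]
  have hzpos : 0 < 1 - ‖z‖ := by linarith
  have hY1 : a * ‖1 - z ^ 2‖ / (1 - ‖z‖) < 1 := by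
    rw [div_lt_one hzpos]
    have : a * ‖1 - z ^ 2‖ ≤ 2 * a := by nlinarith [norm_nonneg (1 - z^2)]
    nlinarith
  have hXY : a * ‖1 - z ^ 2‖ / ‖N‖ ≤
      a * ‖1 - z ^ 2‖ / (1 - ‖z‖) := by
    apply div_le_div_of_nonneg_left _ hzpos hNabs
    positivity
  rw [show distP z ((z + (a : ℂ)) / (1 + (a : ℂ) * z)) = arTanh
    (‖(z + (a : ℂ)) / (1 + (a : ℂ) * z) - z‖ /
      ‖1 - (starRingEnd ℂ) z * ((z + (a : ℂ)) / (1 + (a : ℂ) * z))‖) from by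
        unfold distP; rw [norm_sub_rev z], hX, one_mul]
  exact arTanh_mono (by positivity) hXY hY1
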